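/- For k even, the Clifford quadratic forms α_Cl(2k,0) and α_Cl(0,2k) on (Z/2)^{2k} are equivalent to each other and to the direct sum (α_Cl(0,2))^{k/2} ⊕ (α_Cl(2,0))^{k/2}, i.e. to the form Σ_{j=1}^{k/2} (x_{2j-1}x_{2j} + x_{2j-1} + x_{2j}) + Σ_{j=k/2+1}^{k} x_{2j-1}x_{2j}. -/
import Mathlib

/-- The Clifford generating quadratic form `α_Cl(p,q)` on `(ℤ/2)^m`, `m = p+q`:
`Σ_{i<j} x_i x_j + Σ_{i>p} x_i` (0-based: linear terms for indices `≥ p`). -/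
def cliffordForm (p q : ℕ) (x : Fin (p + q) → ZMod 2) : ZMod 2 :=
  (∑ t ∈ Finset.univ.filter
      (fun t : Fin (p + q) × Fin (p + q) => t.1 < t.2), x t.1 * x t.2)
  + ∑ i ∈ Finset.univ.filter (fun i : Fin (p + q) => p ≤ (i : ℕ)), x i

namespace Stmt7

open Finset

/-- extend a vector on `Fin n` to `ℕ` by zero -/
def ex (n : ℕ) (x : Fin n → ZMod 2) : ℕ → ZMod 2 := fun m => if h : m < n then x ⟨m, h⟩ else 0

lemma ex_lt {n : ℕ} (x : Fin n → ZMod 2) {m : ℕ} (h : m < n) : ex n x m = x ⟨m, h⟩ := dif_pos h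

lemma ex_ge {n : ℕ} (x : Fin n → ZMod 2) {m : ℕ} (h : n ≤ m) : ex n x m = 0 :=
  dif_neg (by omega)

lemma ex_apply {n : ℕ} (x : Fin n → ZMod 2) (i : Fin n) : ex n x (i : ℕ) = x i := by
  rw [ex_lt x i.isLt]

lemma ex_add {n : ℕ} (x y : Fin n → ZMod 2) (m : ℕ) :
    ex n (x + y) m = ex n x m + ex n y m := by
  unfold ex; split
  · rfl
  · simp

lemma z2_mul_self : ∀ a : ZMod 2, a * a = a := by decide
lemma z2_add_self : ∀ a : ZMod 2, a + a = 0 := by decide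
lemma z2_cases : ∀ c : ZMod 2, c = 0 ∨ c = 1 := by decide

lemma natCast_even {t : ℕ} (h : 2 ∣ t) : ((t : ℕ) : ZMod 2) = 0 :=
  (ZMod.natCast_eq_zero_iff t 2).2 h

lemma natCast_odd {t : ℕ} (h : t % 2 = 1) : ((t : ℕ) : ZMod 2) = 1 := by
  have : t = 2 * (t / 2) + 1 := by omega
  rw [this]
  push_cast
  rw [show ((2:ZMod 2)) = 0 by decide]
  ring

lemma sum_pairify (k : ℕ) (f : ℕ → ZMod 2) :
    ∑ i ∈ range (2 * k), f i = ∑ j ∈ range k, (f (2 * j) + f (2 * j + 1)) := by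
  induction k with
  | zero => simp
  | succ k ih =>
      rw [show 2 * (k + 1) = (2 * k) + 1 + 1 by ring, sum_range_succ, sum_range_succ, ih,
        sum_range_succ]
      ring

lemma telescope_range (f : ℕ → ZMod 2) (n : ℕ) :
    ∑ i ∈ range n, (f i + f (i + 1)) = f 0 + f n := by
  induction n with
  | zero => rw [sum_range_zero, z2_add_self]
  | succ n ih =>
      rw [sum_range_succ, ih]
      linear_combination z2_add_self (f n)

lemma telescope_Ico (f : ℕ → ZMod 2) {a b : ℕ} (h : a ≤ b) :
    ∑ i ∈ Ico a b, (f i + f (i + 1)) = f a + f b := by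
  induction b, h using Nat.le_induction with
  | base => rw [Ico_self, sum_empty, z2_add_self]
  | succ b hab ih =>
      rw [Finset.sum_Ico_succ_top hab, ih]
      linear_combination z2_add_self (f b)

lemma sum_ite_lt (G : ℕ → ZMod 2) {jn m : ℕ} (h : jn ≤ m) :
    ∑ i ∈ range m, (if i < jn then G i else 0) = ∑ i ∈ range jn, G i := by
  rw [← Finset.sum_filter]
  congr 1
  ext i
  simp only [mem_filter, mem_range]
  omega

lemma sum_Ico_coeff (k : ℕ) (g : ℕ → ZMod 2) :
    ∑ j ∈ range k, ∑ l ∈ Ico j k, g l = ∑ l ∈ range k, ((l + 1 : ℕ) : ZMod 2) * g l := by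
  induction k with
  | zero => simp
  | succ k ih =>
      rw [sum_range_succ, sum_range_succ]
      have h1 : ∀ j ∈ range k, ∑ l ∈ Ico j (k+1), g l = (∑ l ∈ Ico j k, g l) + g k := by
        intro j hj
        rw [mem_range] at hj
        exact Finset.sum_Ico_succ_top (le_of_lt hj) g
      rw [sum_congr rfl h1, sum_add_distrib, ih, Finset.sum_const, card_range,
        Nat.Ico_succ_singleton, sum_singleton, nsmul_eq_mul]
      push_cast
      ring

variable {k : ℕ}

/-- step 1 map: `y i = z i + z (i+1)` (out of range = 0). -/
def mapY (k : ℕ) (z : Fin (2 * k) → ZMod 2) : Fin (2 * k) → ZMod 2 :=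
  fun i => z i + ex (2 * k) z ((i : ℕ) + 1)

def mapYinv (k : ℕ) (z : Fin (2 * k) → ZMod 2) : Fin (2 * k) → ZMod 2 :=
  fun i => ∑ j ∈ Ico (i : ℕ) (2 * k), ex (2 * k) z j

def mapZ (k : ℕ) (u : Fin (2 * k) → ZMod 2) : Fin (2 * k) → ZMod 2 :=
  fun i => if (i : ℕ) % 2 = 0 then ∑ l ∈ Ico ((i : ℕ) / 2) k, ex (2 * k) u (2 * l) else u i

def mapZinv (k : ℕ) (z : Fin (2 * k) → ZMod 2) : Fin (2 * k) → ZMod 2 :=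
  fun i => if (i : ℕ) % 2 = 0 then z i + ex (2 * k) z ((i : ℕ) + 2) else z i

def mapW (k e : ℕ) (v : Fin (2 * k) → ZMod 2) : Fin (2 * k) → ZMod 2 :=
  fun i => if (i : ℕ) % 2 = 0 ∧ ((i : ℕ) / 2 + e) % 2 = 1 then v i + ex (2 * k) v ((i : ℕ) + 1)
    else v i

def sig (e k j : ℕ) : ℕ := if (j + e) % 2 = 0 then j / 2 else k / 2 + j / 2

def sig' (e k m : ℕ) : ℕ :=
  if m < k / 2 then 2 * m + e % 2 else 2 * (m - k / 2) + (1 - e % 2)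

def mapP (k e : ℕ) (x : Fin (2 * k) → ZMod 2) : Fin (2 * k) → ZMod 2 :=
  fun i => ex (2 * k) x (2 * sig e k ((i : ℕ) / 2) + (i : ℕ) % 2)

def mapPinv (k e : ℕ) (x : Fin (2 * k) → ZMod 2) : Fin (2 * k) → ZMod 2 :=
  fun i => ex (2 * k) x (2 * sig' e k ((i : ℕ) / 2) + (i : ℕ) % 2)

/- σ facts (assuming 2 ∣ k) -/
lemma sig_lt {e : ℕ} (hk : 2 ∣ k) {j : ℕ} (hj : j < k) : sig e k j < k := by
  unfold sig; split <;> omega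

lemma sig'_lt {e : ℕ} (hk : 2 ∣ k) {m : ℕ} (hm : m < k) : sig' e k m < k := by
  unfold sig'; split <;> omega

lemma sig'_sig {e : ℕ} (hk : 2 ∣ k) {j : ℕ} (hj : j < k) : sig' e k (sig e k j) = j := by
  unfold sig sig'; by_cases h : (j + e) % 2 = 0
  · rw [if_pos h, if_pos (by omega)]
    omega
  · rw [if_neg h, if_neg (by omega)]
    omega

lemma sig_sig' {e : ℕ} (hk : 2 ∣ k) {m : ℕ} (hm : m < k) : sig e k (sig' e k m) = m := by
  unfold sig sig'
  by_cases h : m < k / 2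
  · rw [if_pos h, if_pos (by omega)]; omega
  · rw [if_neg h, if_neg (by omega)]; omega

/- ex characterizations -/
lemma ex_mapY (z : Fin (2 * k) → ZMod 2) (m : ℕ) :
    ex (2 * k) (mapY k z) m = ex (2 * k) z m + ex (2 * k) z (m + 1) := by
  by_cases h : m < 2 * k
  · rw [ex_lt _ h, ex_lt _ h]; rfl
  · rw [ex_ge _ (by omega), ex_ge _ (by omega), ex_ge _ (by omega), add_zero]

lemma ex_mapZ_even (u : Fin (2 * k) → ZMod 2) (j : ℕ) :
    ex (2 * k) (mapZ k u) (2 * j) = ∑ l ∈ Ico j k, ex (2 * k) u (2 * l) := by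
  by_cases h : j < k
  · rw [ex_lt _ (by omega)]
    show (if (2 * j) % 2 = 0 then _ else _) = _
    rw [if_pos (by omega), show 2 * j / 2 = j by omega]
  · rw [ex_ge _ (by omega), Finset.Ico_eq_empty (by omega), sum_empty]

lemma ex_mapZ_odd (u : Fin (2 * k) → ZMod 2) (j : ℕ) :
    ex (2 * k) (mapZ k u) (2 * j + 1) = ex (2 * k) u (2 * j + 1) := by
  by_cases h : j < k
  · rw [ex_lt _ (by omega), ex_lt _ (by omega)]
    show (if (2 * j + 1) % 2 = 0 then _ else _) = _
    rw [if_neg (by omega)]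
  · rw [ex_ge _ (by omega), ex_ge _ (by omega)]

lemma ex_mapW_even {e : ℕ} (v : Fin (2 * k) → ZMod 2) (j : ℕ) :
    ex (2 * k) (mapW k e v) (2 * j)
      = ex (2 * k) v (2 * j) + ((j + e : ℕ) : ZMod 2) * ex (2 * k) v (2 * j + 1) := by
  by_cases h : j < k
  · rw [ex_lt (mapW k e v) (show 2 * j < 2 * k by omega)]
    show (if (2 * j) % 2 = 0 ∧ ((2 * j) / 2 + e) % 2 = 1 then _ else _) = _
    by_cases hj : (j + e) % 2 = 0
    · rw [if_neg (by omega)]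
      rw [natCast_even (Nat.dvd_of_mod_eq_zero hj), zero_mul, add_zero,
        ex_lt _ (show 2 * j < 2 * k by omega)]
    · rw [if_pos (by constructor <;> omega), natCast_odd (by omega), one_mul,
        ex_lt _ (show 2 * j + 1 < 2 * k by omega), ex_lt _ (show 2 * j < 2 * k by omega)]
  · rw [ex_ge _ (by omega), ex_ge _ (by omega), ex_ge _ (by omega)]
    ring

lemma ex_mapW_odd {e : ℕ} (v : Fin (2 * k) → ZMod 2) (j : ℕ) :
    ex (2 * k) (mapW k e v) (2 * j + 1) = ex (2 * k) v (2 * j + 1) := by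
  by_cases h : j < k
  · rw [ex_lt _ (by omega), ex_lt _ (by omega)]
    show (if (2 * j + 1) % 2 = 0 ∧ _ then _ else _) = _
    rw [if_neg (by omega)]
  · rw [ex_ge _ (by omega), ex_ge _ (by omega)]

lemma ex_mapP {e : ℕ} (x : Fin (2 * k) → ZMod 2) {m : ℕ} (h : m < 2 * k) :
    ex (2 * k) (mapP k e x) m = ex (2 * k) x (2 * sig e k (m / 2) + m % 2) := by
  rw [ex_lt _ h]; rfl

/- function equality from `ex` equality, and parity case analysis -/
lemma funeq_of_ex {n : ℕ} {x y : Fin n → ZMod 2} (h : ∀ m, ex n x m = ex n y m) : x = y := by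
  funext i
  have := h (i : ℕ)
  rwa [ex_apply, ex_apply] at this

lemma parity_cases {P : ℕ → Prop} (h0 : ∀ j, P (2 * j)) (h1 : ∀ j, P (2 * j + 1)) :
    ∀ m, P m := by
  intro m
  have hm : m = 2 * (m / 2) ∨ m = 2 * (m / 2) + 1 := by omega
  rcases hm with hm | hm
  · rw [hm]; exact h0 _
  · rw [hm]; exact h1 _

/- ex characterizations of the inverse maps -/
lemma ex_mapYinv (z : Fin (2 * k) → ZMod 2) (m : ℕ) :
    ex (2 * k) (mapYinv k z) m = ∑ j ∈ Ico m (2 * k), ex (2 * k) z j := by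
  by_cases h : m < 2 * k
  · rw [ex_lt _ h]; rfl
  · rw [ex_ge _ (by omega), Finset.Ico_eq_empty (by omega), sum_empty]

lemma ex_mapZinv_even (z : Fin (2 * k) → ZMod 2) (j : ℕ) :
    ex (2 * k) (mapZinv k z) (2 * j) = ex (2 * k) z (2 * j) + ex (2 * k) z (2 * j + 2) := by
  by_cases h : j < k
  · rw [ex_lt _ (show 2 * j < 2 * k by omega)]
    show (if (2 * j) % 2 = 0 then _ else _) = _
    rw [if_pos (by omega), ex_lt _ (show 2 * j < 2 * k by omega)]
  · rw [ex_ge _ (by omega), ex_ge _ (by omega), ex_ge _ (by omega), add_zero]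

lemma ex_mapZinv_odd (z : Fin (2 * k) → ZMod 2) (j : ℕ) :
    ex (2 * k) (mapZinv k z) (2 * j + 1) = ex (2 * k) z (2 * j + 1) := by
  by_cases h : j < k
  · rw [ex_lt _ (show 2 * j + 1 < 2 * k by omega), ex_lt _ (show 2 * j + 1 < 2 * k by omega)]
    show (if (2 * j + 1) % 2 = 0 then _ else _) = _
    rw [if_neg (by omega)]
  · rw [ex_ge _ (by omega), ex_ge _ (by omega)]

lemma ex_mapPinv {e : ℕ} (x : Fin (2 * k) → ZMod 2) {m : ℕ} (h : m < 2 * k) :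
    ex (2 * k) (mapPinv k e x) m = ex (2 * k) x (2 * sig' e k (m / 2) + m % 2) := by
  rw [ex_lt _ h]; rfl

/- inverse properties -/
lemma mapY_left (z : Fin (2 * k) → ZMod 2) : mapYinv k (mapY k z) = z := by
  apply funeq_of_ex
  intro m
  rw [ex_mapYinv]
  by_cases h : m ≤ 2 * k
  · rw [sum_congr rfl fun j _ => ex_mapY z j, telescope_Ico _ h,
      ex_ge z (show 2 * k ≤ 2 * k by omega), add_zero]
  · rw [Finset.Ico_eq_empty (by omega), sum_empty, ex_ge z (by omega)]

lemma mapY_right (z : Fin (2 * k) → ZMod 2) : mapY k (mapYinv k z) = z := by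
  funext i
  show mapYinv k z i + ex (2 * k) (mapYinv k z) ((i : ℕ) + 1) = z i
  have h1 : mapYinv k z i = ∑ j ∈ Ico (i : ℕ) (2 * k), ex (2 * k) z j := rfl
  rw [h1, ex_mapYinv, Finset.sum_eq_sum_Ico_succ_bot i.isLt, ex_lt z i.isLt]
  have : (⟨(i : ℕ), i.isLt⟩ : Fin (2 * k)) = i := rfl
  rw [this]
  linear_combination z2_add_self (∑ j ∈ Ico ((i : ℕ) + 1) (2 * k), ex (2 * k) z j)

lemma mapZ_left (u : Fin (2 * k) → ZMod 2) : mapZinv k (mapZ k u) = u := by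
  apply funeq_of_ex
  apply parity_cases
  · intro j
    rw [ex_mapZinv_even, ex_mapZ_even, show 2 * j + 2 = 2 * (j + 1) by ring, ex_mapZ_even]
    by_cases h : j < k
    · rw [Finset.sum_eq_sum_Ico_succ_bot h]
      linear_combination z2_add_self (∑ l ∈ Ico (j + 1) k, ex (2 * k) u (2 * l))
    · rw [Finset.Ico_eq_empty (by omega), Finset.Ico_eq_empty (by omega), sum_empty,
        ex_ge u (by omega), add_zero]
  · intro j
    rw [ex_mapZinv_odd, ex_mapZ_odd]

lemma mapZ_right (z : Fin (2 * k) → ZMod 2) : mapZ k (mapZinv k z) = z := by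
  apply funeq_of_ex
  apply parity_cases
  · intro j
    rw [ex_mapZ_even]
    have h1 : ∀ l ∈ Ico j k, ex (2 * k) (mapZinv k z) (2 * l)
        = (fun t => ex (2 * k) z (2 * t)) l + (fun t => ex (2 * k) z (2 * t)) (l + 1) := by
      intro l _
      rw [ex_mapZinv_even]
      show _ = _ + ex (2 * k) z (2 * (l + 1))
      rw [show 2 * (l + 1) = 2 * l + 2 by ring]
    rw [sum_congr rfl h1]
    by_cases h : j ≤ k
    · rw [telescope_Ico _ h]
      show ex (2 * k) z (2 * j) + ex (2 * k) z (2 * k) = _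
      rw [ex_ge z (show 2 * k ≤ 2 * k by omega), add_zero]
    · rw [Finset.Ico_eq_empty (by omega), sum_empty, ex_ge z (by omega)]
  · intro j
    rw [ex_mapZ_odd, ex_mapZinv_odd]

lemma mapW_invol {e : ℕ} (v : Fin (2 * k) → ZMod 2) : mapW k e (mapW k e v) = v := by
  apply funeq_of_ex
  apply parity_cases
  · intro j
    rw [ex_mapW_even, ex_mapW_even, ex_mapW_odd]
    linear_combination z2_add_self (((j + e : ℕ) : ZMod 2) * ex (2 * k) v (2 * j + 1))
  · intro j
    rw [ex_mapW_odd, ex_mapW_odd]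

lemma mapP_left {e : ℕ} (hk : 2 ∣ k) (x : Fin (2 * k) → ZMod 2) :
    mapPinv k e (mapP k e x) = x := by
  apply funeq_of_ex
  intro m
  by_cases h : m < 2 * k
  · have hm2 : m / 2 < k := by omega
    have hs : sig' e k (m / 2) < k := sig'_lt hk hm2
    rw [ex_mapPinv _ h, ex_mapP _ (show 2 * sig' e k (m / 2) + m % 2 < 2 * k by omega)]
    rw [show (2 * sig' e k (m / 2) + m % 2) / 2 = sig' e k (m / 2) by omega,
      show (2 * sig' e k (m / 2) + m % 2) % 2 = m % 2 by omega,
      sig_sig' hk hm2, show 2 * (m / 2) + m % 2 = m by omega]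
  · rw [ex_ge _ (by omega), ex_ge _ (by omega)]

lemma mapP_right {e : ℕ} (hk : 2 ∣ k) (x : Fin (2 * k) → ZMod 2) :
    mapP k e (mapPinv k e x) = x := by
  apply funeq_of_ex
  intro m
  by_cases h : m < 2 * k
  · have hm2 : m / 2 < k := by omega
    have hs : sig e k (m / 2) < k := sig_lt hk hm2
    rw [ex_mapP _ h, ex_mapPinv _ (show 2 * sig e k (m / 2) + m % 2 < 2 * k by omega)]
    rw [show (2 * sig e k (m / 2) + m % 2) / 2 = sig e k (m / 2) by omega,
      show (2 * sig e k (m / 2) + m % 2) % 2 = m % 2 by omega,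
      sig'_sig hk hm2, show 2 * (m / 2) + m % 2 = m by omega]
  · rw [ex_ge _ (by omega), ex_ge _ (by omega)]

/- additivity -/
lemma mapY_add (x y : Fin (2 * k) → ZMod 2) : mapY k (x + y) = mapY k x + mapY k y := by
  funext i
  simp only [mapY, Pi.add_apply, ex_add]
  ring

lemma mapYinv_add (x y : Fin (2 * k) → ZMod 2) :
    mapYinv k (x + y) = mapYinv k x + mapYinv k y := by
  funext i
  simp only [mapYinv, Pi.add_apply, ex_add]
  rw [sum_add_distrib]

lemma mapZ_add (x y : Fin (2 * k) → ZMod 2) : mapZ k (x + y) = mapZ k x + mapZ k y := by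
  funext i
  simp only [mapZ, Pi.add_apply]
  by_cases hc : (i : ℕ) % 2 = 0
  · simp only [if_pos hc, ex_add]
    rw [sum_add_distrib]
  · simp only [if_neg hc]

lemma mapZinv_add (x y : Fin (2 * k) → ZMod 2) :
    mapZinv k (x + y) = mapZinv k x + mapZinv k y := by
  funext i
  simp only [mapZinv, Pi.add_apply]
  by_cases hc : (i : ℕ) % 2 = 0
  · simp only [if_pos hc, ex_add]
    ring
  · simp only [if_neg hc]

lemma mapW_add {e : ℕ} (x y : Fin (2 * k) → ZMod 2) :
    mapW k e (x + y) = mapW k e x + mapW k e y := by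
  funext i
  simp only [mapW, Pi.add_apply]
  by_cases hc : (i : ℕ) % 2 = 0 ∧ ((i : ℕ) / 2 + e) % 2 = 1
  · simp only [if_pos hc, ex_add]
    ring
  · simp only [if_neg hc]

lemma mapP_add {e : ℕ} (x y : Fin (2 * k) → ZMod 2) :
    mapP k e (x + y) = mapP k e x + mapP k e y := by
  funext i
  simp only [mapP, Pi.add_apply, ex_add]

/- builder for linear equivalences -/
def mkE (n : ℕ) (f g : (Fin n → ZMod 2) → (Fin n → ZMod 2))
    (hf : ∀ x y, f (x + y) = f x + f y)
    (hgf : ∀ x, g (f x) = x) (hfg : ∀ x, f (g x) = x) :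
    (Fin n → ZMod 2) ≃ₗ[ZMod 2] (Fin n → ZMod 2) where
  toFun := f
  invFun := g
  left_inv := hgf
  right_inv := hfg
  map_add' := hf
  map_smul' := by
    intro c x
    have h0 : f 0 = 0 := by
      have h := hf 0 0
      rw [add_zero] at h
      exact add_left_cancel (a := f 0) (by rw [add_zero]; exact h.symm)
    rcases z2_cases c with rfl | rfl
    · simp [h0]
    · simp

@[simp] lemma mkE_apply (n : ℕ) (f g) (hf) (hgf) (hfg) (x : Fin n → ZMod 2) :
    mkE n f g hf hgf hfg x = f x := rfl

/- the normal forms, as functions of `ℕ`-indexed coefficient vectors -/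
def NN (n : ℕ) (g : ℕ → ZMod 2) : ZMod 2 := ∑ j ∈ range n, ∑ i ∈ range j, g i * g j
def LL (n : ℕ) (g : ℕ → ZMod 2) : ZMod 2 := ∑ i ∈ range n, g i
def QQ (k : ℕ) (g : ℕ → ZMod 2) : ZMod 2 := ∑ j ∈ range (2 * k), g j * g (j + 1)

def gam (k e : ℕ) (u : Fin (2 * k) → ZMod 2) : ZMod 2 :=
  (∑ j ∈ range k, ex (2 * k) u (2 * j) * ex (2 * k) u (2 * j + 1))
  + (∑ j ∈ range k, ex (2 * k) u (2 * j + 1))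
  + ∑ j ∈ range k, ((j + 1 + e : ℕ) : ZMod 2) * ex (2 * k) u (2 * j)

def tau' (k e : ℕ) (v : Fin (2 * k) → ZMod 2) : ZMod 2 :=
  ∑ j ∈ range k, (ex (2 * k) v (2 * j) * ex (2 * k) v (2 * j + 1)
    + ((j + 1 + e : ℕ) : ZMod 2) * (ex (2 * k) v (2 * j) + ex (2 * k) v (2 * j + 1)))

def tauR (k : ℕ) (x : Fin (2 * k) → ZMod 2) : ZMod 2 :=
  ∑ j ∈ range k, (ex (2 * k) x (2 * j) * ex (2 * k) x (2 * j + 1)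
    + if j < k / 2 then ex (2 * k) x (2 * j) + ex (2 * k) x (2 * j + 1) else 0)

/- Step 1: the `Y` substitution -/
lemma L1core (z : Fin (2 * k) → ZMod 2) :
    NN (2 * k) (ex (2 * k) (mapY k z))
      = ex (2 * k) z 0 + LL (2 * k) (ex (2 * k) z) + QQ k (ex (2 * k) z) := by
  unfold NN LL QQ
  have key : ∀ j ∈ range (2 * k),
      (∑ i ∈ range j, ex (2 * k) (mapY k z) i * ex (2 * k) (mapY k z) j)
      = ex (2 * k) z 0 * (ex (2 * k) z j + ex (2 * k) z (j + 1)) + ex (2 * k) z j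
        + ex (2 * k) z j * ex (2 * k) z (j + 1) := by
    intro j hj
    rw [mem_range] at hj
    rw [← Finset.sum_mul]
    have h2 : ∑ i ∈ range j, ex (2 * k) (mapY k z) i = ex (2 * k) z 0 + ex (2 * k) z j := by
      rw [sum_congr rfl fun i _ => ex_mapY z i, telescope_range]
    rw [h2, ex_mapY z j]
    exact (by decide : ∀ a b c : ZMod 2, (a + b) * (b + c) = a * (b + c) + b + b * c) _ _ _
  rw [sum_congr rfl key, sum_add_distrib, sum_add_distrib, ← Finset.mul_sum,
    telescope_range, ex_ge z (show 2 * k ≤ 2 * k by omega), add_zero, z2_mul_self]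

lemma LL_mapY (z : Fin (2 * k) → ZMod 2) :
    LL (2 * k) (ex (2 * k) (mapY k z)) = ex (2 * k) z 0 := by
  unfold LL
  rw [sum_congr rfl fun i _ => ex_mapY z i, telescope_range,
    ex_ge z (show 2 * k ≤ 2 * k by omega), add_zero]

lemma L1a (z : Fin (2 * k) → ZMod 2) :
    NN (2 * k) (ex (2 * k) (mapY k z)) + LL (2 * k) (ex (2 * k) (mapY k z))
      = ((0 : ℕ) : ZMod 2) * ex (2 * k) z 0 + LL (2 * k) (ex (2 * k) z)
        + QQ k (ex (2 * k) z) := by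
  rw [L1core, LL_mapY, Nat.cast_zero, zero_mul, zero_add]
  linear_combination z2_add_self (ex (2 * k) z 0)

lemma L1b (z : Fin (2 * k) → ZMod 2) :
    NN (2 * k) (ex (2 * k) (mapY k z))
      = ((1 : ℕ) : ZMod 2) * ex (2 * k) z 0 + LL (2 * k) (ex (2 * k) z)
        + QQ k (ex (2 * k) z) := by
  rw [L1core, Nat.cast_one, one_mul]

/- Step 2: the `Z` substitution -/
lemma L2 (e : ℕ) (u : Fin (2 * k) → ZMod 2) :
    ((e : ℕ) : ZMod 2) * ex (2 * k) (mapZ k u) 0 + LL (2 * k) (ex (2 * k) (mapZ k u))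
      + QQ k (ex (2 * k) (mapZ k u)) = gam k e u := by
  unfold LL QQ gam
  have h0 : ex (2 * k) (mapZ k u) 0 = ∑ l ∈ range k, ex (2 * k) u (2 * l) := by
    have := ex_mapZ_even u 0
    rw [mul_zero] at this
    rw [this, Nat.Ico_zero_eq_range]
  have hlin : ∑ i ∈ range (2 * k), ex (2 * k) (mapZ k u) i
      = (∑ l ∈ range k, ((l + 1 : ℕ) : ZMod 2) * ex (2 * k) u (2 * l))
        + ∑ j ∈ range k, ex (2 * k) u (2 * j + 1) := by
    rw [sum_pairify, sum_congr rfl (fun j _ => by rw [ex_mapZ_even, ex_mapZ_odd]),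
      sum_add_distrib, sum_Ico_coeff]
  have hquad : ∑ j ∈ range (2 * k),
        ex (2 * k) (mapZ k u) j * ex (2 * k) (mapZ k u) (j + 1)
      = ∑ j ∈ range k, ex (2 * k) u (2 * j) * ex (2 * k) u (2 * j + 1) := by
    rw [sum_pairify]
    apply sum_congr rfl
    intro j hj
    rw [mem_range] at hj
    rw [show 2 * j + 1 + 1 = 2 * (j + 1) by ring, ex_mapZ_even, ex_mapZ_odd, ex_mapZ_even,
      Finset.sum_eq_sum_Ico_succ_bot hj]
    linear_combination z2_add_self
      (ex (2 * k) u (2 * j + 1) * ∑ l ∈ Ico (j + 1) k, ex (2 * k) u (2 * l))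
  rw [h0, hlin, hquad, Finset.mul_sum]
  have hsplit : ∑ l ∈ range k, ((l + 1 + e : ℕ) : ZMod 2) * ex (2 * k) u (2 * l)
      = (∑ l ∈ range k, ((e : ℕ) : ZMod 2) * ex (2 * k) u (2 * l))
        + ∑ l ∈ range k, ((l + 1 : ℕ) : ZMod 2) * ex (2 * k) u (2 * l) := by
    rw [← sum_add_distrib]
    apply sum_congr rfl
    intro l _
    push_cast
    ring
  rw [hsplit]
  ring

/- Step 3: the `W` substitution -/
lemma L3 (e : ℕ) (v : Fin (2 * k) → ZMod 2) : gam k e (mapW k e v) = tau' k e v := by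
  unfold gam tau'
  rw [← sum_add_distrib, ← sum_add_distrib]
  apply sum_congr rfl
  intro j _
  rw [ex_mapW_even, ex_mapW_odd,
    show ((j + 1 + e : ℕ) : ZMod 2) = ((j + e : ℕ) : ZMod 2) + 1 by push_cast; ring]
  exact (by decide : ∀ a b c : ZMod 2,
    (a + c * b) * b + b + (c + 1) * (a + c * b) = a * b + (c + 1) * (a + b)) _ _ _

/- Step 4: the pair permutation -/
lemma L4 (e : ℕ) (hk : 2 ∣ k) (x : Fin (2 * k) → ZMod 2) :
    tau' k e (mapP k e x) = tauR k x := by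
  unfold tau' tauR
  refine Finset.sum_nbij' (sig e k) (sig' e k) ?_ ?_ ?_ ?_ ?_
  · intro j hj
    rw [mem_range] at hj ⊢
    exact sig_lt hk hj
  · intro m hm
    rw [mem_range] at hm ⊢
    exact sig'_lt hk hm
  · intro j hj
    rw [mem_range] at hj
    exact sig'_sig hk hj
  · intro m hm
    rw [mem_range] at hm
    exact sig_sig' hk hm
  · intro j hj
    rw [mem_range] at hj
    rw [ex_mapP x (show 2 * j < 2 * k by omega), ex_mapP x (show 2 * j + 1 < 2 * k by omega),
      show (2 * j) / 2 = j by omega, show (2 * j) % 2 = 0 by omega,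
      show (2 * j + 1) / 2 = j by omega, show (2 * j + 1) % 2 = 1 by omega, add_zero]
    congr 1
    by_cases hc : (j + e) % 2 = 0
    · rw [if_pos (show sig e k j < k / 2 by unfold sig; rw [if_pos hc]; omega),
        natCast_odd (show (j + 1 + e) % 2 = 1 by omega), one_mul]
    · rw [if_neg (show ¬ sig e k j < k / 2 by unfold sig; rw [if_neg hc]; omega),
        natCast_even (Nat.dvd_of_mod_eq_zero (show (j + 1 + e) % 2 = 0 by omega)), zero_mul]

/- conversion of `cliffordForm` into range-sum normal form -/
lemma pairs_eq {n : ℕ} (y : Fin n → ZMod 2) :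
    (∑ t ∈ Finset.univ.filter (fun t : Fin n × Fin n => t.1 < t.2), y t.1 * y t.2)
      = NN n (ex n y) := by
  rw [Finset.sum_filter, ← Finset.univ_product_univ, Finset.sum_product_right]
  unfold NN
  have step : ∀ j : Fin n,
      (∑ i : Fin n, if (i, j).1 < (i, j).2 then y (i, j).1 * y (i, j).2 else 0)
        = ∑ i ∈ range (j : ℕ), ex n y i * ex n y (j : ℕ) := by
    intro j
    have e1 : ∀ i : Fin n, (if (i, j).1 < (i, j).2 then y (i, j).1 * y (i, j).2 else 0)
        = (fun m => if m < (j : ℕ) then ex n y m * ex n y (j : ℕ) else 0) (i : ℕ) := by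
      intro i
      show (if i < j then y i * y j else 0) = _
      rw [show ((fun m => if m < (j : ℕ) then ex n y m * ex n y (j : ℕ) else 0) (i : ℕ))
          = if (i : ℕ) < (j : ℕ) then ex n y (i : ℕ) * ex n y (j : ℕ) else 0 from rfl,
        ex_apply, ex_apply]
      exact if_congr Fin.lt_def rfl rfl
    rw [Finset.sum_congr rfl fun i _ => e1 i,
      Fin.sum_univ_eq_sum_range (fun m => if m < (j : ℕ) then ex n y m * ex n y (j : ℕ) else 0) n,
      sum_ite_lt _ (le_of_lt j.isLt)]
  rw [Finset.sum_congr rfl fun j _ => step j,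
    Fin.sum_univ_eq_sum_range (fun m => ∑ i ∈ range m, ex n y i * ex n y m) n]

lemma ex_precast {n n' : ℕ} (h : n' = n) (x : Fin n → ZMod 2) :
    ex n' (fun i => x (Fin.cast h i)) = ex n x := by
  funext m
  by_cases hm : m < n
  · rw [ex_lt _ (show m < n' by omega), ex_lt _ hm]
    rfl
  · rw [ex_ge _ (by omega), ex_ge _ (by omega)]

lemma cliff1 (k : ℕ) (x : Fin (2 * k) → ZMod 2) (h : 2 * k + 0 = 2 * k) :
    cliffordForm (2 * k) 0 (fun i => x (Fin.cast h i)) = NN (2 * k) (ex (2 * k) x) := by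
  unfold cliffordForm
  rw [pairs_eq (fun i => x (Fin.cast h i)), ex_precast h]
  have hempty : (Finset.univ.filter (fun i : Fin (2 * k + 0) => 2 * k ≤ (i : ℕ))) = ∅ := by
    apply Finset.filter_false_of_mem
    intro i _
    have := i.isLt
    omega
  rw [hempty, sum_empty, add_zero, Nat.add_zero]

lemma cliff2 (k : ℕ) (x : Fin (2 * k) → ZMod 2) (h : 0 + 2 * k = 2 * k) :
    cliffordForm 0 (2 * k) (fun i => x (Fin.cast h i))
      = NN (2 * k) (ex (2 * k) x) + LL (2 * k) (ex (2 * k) x) := by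
  unfold cliffordForm
  rw [pairs_eq (fun i => x (Fin.cast h i)), ex_precast h]
  have hNN : NN (0 + 2 * k) (ex (2 * k) x) = NN (2 * k) (ex (2 * k) x) := by
    rw [Nat.zero_add]
  rw [hNN]
  congr 1
  have hfull : (Finset.univ.filter (fun i : Fin (0 + 2 * k) => 0 ≤ (i : ℕ)))
      = Finset.univ := by
    apply Finset.filter_true_of_mem
    intro i _
    exact Nat.zero_le _
  rw [hfull]
  have e1 : ∀ i : Fin (0 + 2 * k), x (Fin.cast h i) = (fun m => ex (2 * k) x m) (i : ℕ) := by
    intro i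
    show _ = ex (2 * k) x (i : ℕ)
    rw [ex_lt _ (show (i : ℕ) < 2 * k by have := i.isLt; omega)]
    rfl
  rw [Finset.sum_congr rfl fun i _ => e1 i,
    Fin.sum_univ_eq_sum_range (fun m => ex (2 * k) x m) (0 + 2 * k)]
  rw [Nat.zero_add]
  rfl

/- the composite linear equivalences -/
def chain (k e : ℕ) (hk : 2 ∣ k) :
    (Fin (2 * k) → ZMod 2) ≃ₗ[ZMod 2] (Fin (2 * k) → ZMod 2) :=
  ((mkE (2 * k) (mapP k e) (mapPinv k e) mapP_add (mapP_left hk) (mapP_right hk)).trans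
    (mkE (2 * k) (mapW k e) (mapW k e) mapW_add mapW_invol mapW_invol)).trans
  ((mkE (2 * k) (mapZ k) (mapZinv k) mapZ_add mapZ_left mapZ_right).trans
    (mkE (2 * k) (mapY k) (mapYinv k) mapY_add mapY_left mapY_right))

lemma chain_apply (k e : ℕ) (hk : 2 ∣ k) (x : Fin (2 * k) → ZMod 2) :
    chain k e hk x = mapY k (mapZ k (mapW k e (mapP k e x))) := rfl

lemma chainNNLL (k : ℕ) (hk : 2 ∣ k) (x : Fin (2 * k) → ZMod 2) :
    NN (2 * k) (ex (2 * k) (chain k 0 hk x)) + LL (2 * k) (ex (2 * k) (chain k 0 hk x))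
      = tauR k x := by
  rw [chain_apply, L1a, L2 0, L3 0, L4 0 hk]

lemma chainNN (k : ℕ) (hk : 2 ∣ k) (x : Fin (2 * k) → ZMod 2) :
    NN (2 * k) (ex (2 * k) (chain k 1 hk x)) = tauR k x := by
  rw [chain_apply, L1b, L2 1, L3 1, L4 1 hk]

end Stmt7

open Stmt7 in
/-- for even `k`, the forms `α_Cl(2k,0)` and `α_Cl(0,2k)` on
`(ℤ/2)^{2k}` are equivalent to each other and to the direct sum of `k/2`
copies of `α_Cl(0,2)(u,v) = uv + u + v` followed by `k/2` copies of
`α_Cl(2,0)(u,v) = uv` on consecutive pairs of coordinates. -/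
theorem stmt_7 (k : ℕ) (hk : 2 ∣ k) :
    let τ : (Fin (2 * k) → ZMod 2) → ZMod 2 := fun x =>
      ∑ j : Fin k,
        (x ⟨2 * (j : ℕ), by have := j.isLt; omega⟩ *
           x ⟨2 * (j : ℕ) + 1, by have := j.isLt; omega⟩
         + if (j : ℕ) < k / 2 then
             x ⟨2 * (j : ℕ), by have := j.isLt; omega⟩ +
               x ⟨2 * (j : ℕ) + 1, by have := j.isLt; omega⟩
           else 0)
    let α₁ : (Fin (2 * k) → ZMod 2) → ZMod 2 := fun x =>
      cliffordForm (2 * k) 0 (fun i => x (Fin.cast (by omega) i))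
    let α₂ : (Fin (2 * k) → ZMod 2) → ZMod 2 := fun x =>
      cliffordForm 0 (2 * k) (fun i => x (Fin.cast (by omega) i))
    (∃ G : (Fin (2 * k) → ZMod 2) ≃ₗ[ZMod 2] (Fin (2 * k) → ZMod 2),
        ∀ x, α₁ (G x) = α₂ x) ∧
    (∃ G : (Fin (2 * k) → ZMod 2) ≃ₗ[ZMod 2] (Fin (2 * k) → ZMod 2),
        ∀ x, α₁ (G x) = τ x) ∧
    (∃ G : (Fin (2 * k) → ZMod 2) ≃ₗ[ZMod 2] (Fin (2 * k) → ZMod 2),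
        ∀ x, α₂ (G x) = τ x) := by
  intro τ α₁ α₂
  have hτ : ∀ y : Fin (2 * k) → ZMod 2, τ y = tauR k y := by
    intro y
    show (∑ j : Fin k,
        (y ⟨2 * (j : ℕ), by have := j.isLt; omega⟩ *
           y ⟨2 * (j : ℕ) + 1, by have := j.isLt; omega⟩
         + if (j : ℕ) < k / 2 then
             y ⟨2 * (j : ℕ), by have := j.isLt; omega⟩ +
               y ⟨2 * (j : ℕ) + 1, by have := j.isLt; omega⟩
           else 0)) = tauR k y
    have e1 : ∀ j : Fin k,
        (y ⟨2 * (j : ℕ), by have := j.isLt; omega⟩ *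
           y ⟨2 * (j : ℕ) + 1, by have := j.isLt; omega⟩
         + if (j : ℕ) < k / 2 then
             y ⟨2 * (j : ℕ), by have := j.isLt; omega⟩ +
               y ⟨2 * (j : ℕ) + 1, by have := j.isLt; omega⟩
           else 0)
        = (fun m => ex (2 * k) y (2 * m) * ex (2 * k) y (2 * m + 1)
            + if m < k / 2 then ex (2 * k) y (2 * m) + ex (2 * k) y (2 * m + 1) else 0)
            ((j : ℕ)) := by
      intro j
      have h1 : 2 * (j : ℕ) < 2 * k := by have := j.isLt; omega
      have h2 : 2 * (j : ℕ) + 1 < 2 * k := by have := j.isLt; omega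
      show _ = ex (2 * k) y (2 * (j : ℕ)) * ex (2 * k) y (2 * (j : ℕ) + 1)
          + if (j : ℕ) < k / 2 then
              ex (2 * k) y (2 * (j : ℕ)) + ex (2 * k) y (2 * (j : ℕ) + 1) else 0
      rw [ex_lt y h1, ex_lt y h2]
    rw [Finset.sum_congr rfl fun j _ => e1 j,
      Fin.sum_univ_eq_sum_range (fun m => ex (2 * k) y (2 * m) * ex (2 * k) y (2 * m + 1)
        + if m < k / 2 then ex (2 * k) y (2 * m) + ex (2 * k) y (2 * m + 1) else 0) k]
    rfl
  have hα₁ : ∀ y : Fin (2 * k) → ZMod 2, α₁ y = NN (2 * k) (ex (2 * k) y) := by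
    intro y
    exact cliff1 k y (by omega)
  have hα₂ : ∀ y : Fin (2 * k) → ZMod 2,
      α₂ y = NN (2 * k) (ex (2 * k) y) + LL (2 * k) (ex (2 * k) y) := by
    intro y
    exact cliff2 k y (by omega)
  refine ⟨⟨(chain k 0 hk).symm.trans (chain k 1 hk), fun x => ?_⟩,
          ⟨chain k 1 hk, fun x => ?_⟩,
          ⟨chain k 0 hk, fun x => ?_⟩⟩
  · rw [LinearEquiv.trans_apply, hα₁, hα₂, chainNN k hk, ← chainNNLL k hk ((chain k 0 hk).symm x),
      LinearEquiv.apply_symm_apply]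
  · rw [hα₁, hτ, chainNN k hk]
  · rw [hα₂, hτ, chainNNLL k hk]
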